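/- Let u_n be the number of uniquely closable Motzkin trees with exactly n nodes. Then u_0 = 0, u_1 = 0, u_2 = 1, u_3 = 0, u_4 = 1, u_5 = 1, u_6 = 2, u_7 = 2, and for every n ≥ 0: (256n²+256n)·u_n + (−128n²−640n−512)·u_{n+1} + (−128n²−704n−880)·u_{n+2} + (−32n²−64n+152)·u_{n+3} + (64n²+592n+1324)·u_{n+4} + (24n²+232n+540)·u_{n+5} + (−16n²−200n−616)·u_{n+6} + (−2n²−32n−128)·u_{n+7} + (n²+17n+72)·u_{n+8} = 0. -/

import Mathlib

/-- Motzkin trees (binary-unary trees): leaf `v`, unary `l`, binary `a`. -/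
inductive Mot : Type
  | v : Mot
  | l : Mot → Mot
  | a : Mot → Mot → Mot
deriving DecidableEq

/-- Lambda terms in de Bruijn form. -/
inductive Lam : Type
  | v : Nat → Lam
  | l : Lam → Lam
  | a : Lam → Lam → Lam
deriving DecidableEq

/-- `t` is closed at depth `d`. -/
def Lam.closedAt : Lam → Nat → Prop
  | .v i, d => i < d
  | .l t, d => t.closedAt (d + 1)
  | .a s t, d => s.closedAt d ∧ t.closedAt d

/-- The Motzkin-tree skeleton of a de Bruijn term. -/
def Lam.skel : Lam → Mot
  | .v _ => .v
  | .l t => .l t.skel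
  | .a s t => .a s.skel t.skel

/-- Total node count of a Motzkin tree. -/
def Mot.nodes : Mot → ℕ
  | .v => 1
  | .l t => 1 + t.nodes
  | .a s t => 1 + s.nodes + t.nodes

/-- A Motzkin tree is uniquely closable if exactly one closed term has it as skeleton. -/
def Mot.UniquelyClosable (X : Mot) : Prop := ∃! t : Lam, t.closedAt 0 ∧ t.skel = X

/-- `u n` is the number of uniquely closable Motzkin trees with exactly `n` nodes. -/
noncomputable def u (n : ℕ) : ℕ := Nat.card {t : Mot // t.nodes = n ∧ t.UniquelyClosable}

def Mot.good : Mot → ℕ → Prop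
  | .v, d => d = 1
  | .l t, d => t.good (d + 1)
  | .a s t, d => s.good d ∧ t.good d

def Mot.fill : Mot → Lam
  | .v => .v 0
  | .l t => .l t.fill
  | .a s t => .a s.fill t.fill

lemma Mot.skel_fill : ∀ X : Mot, X.fill.skel = X
  | .v => rfl
  | .l t => by simp [Mot.fill, Lam.skel, skel_fill t]
  | .a s t => by simp [Mot.fill, Lam.skel, skel_fill s, skel_fill t]

lemma Mot.fill_closed : ∀ (X : Mot) (d : ℕ), X.good d → X.fill.closedAt d
  | .v, d, h => by simp [Mot.good] at h; simp [Mot.fill, Lam.closedAt, h]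
  | .l t, d, h => fill_closed t (d + 1) h
  | .a s t, d, h => ⟨fill_closed s d h.1, fill_closed t d h.2⟩

lemma Mot.closed_unique : ∀ (X : Mot) (d : ℕ), X.good d → ∀ s t : Lam,
    s.closedAt d → s.skel = X → t.closedAt d → t.skel = X → s = t
  | .v, d, h, s, t, hs, hss, ht, hts => by
    cases s with
    | v i =>
      cases t with
      | v j =>
        have hd : d = 1 := h
        have hi : i < d := hs
        have hj : j < d := ht
        have : i = j := by omega
        rw [this]
      | l t => simp [Lam.skel] at hts
      | a s t => simp [Lam.skel] at hts
    | l s => simp [Lam.skel] at hss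
    | a s₁ s₂ => simp [Lam.skel] at hss
  | .l Y, d, h, s, t, hs, hss, ht, hts => by
    cases s with
    | v i => simp [Lam.skel] at hss
    | l s₀ =>
      cases t with
      | v j => simp [Lam.skel] at hts
      | l t₀ =>
        simp [Lam.skel] at hss hts
        exact congrArg Lam.l (closed_unique Y (d+1) h s₀ t₀ hs hss ht hts)
      | a t₁ t₂ => simp [Lam.skel] at hts
    | a s₁ s₂ => simp [Lam.skel] at hss
  | .a Y Z, d, h, s, t, hs, hss, ht, hts => by
    cases s with
    | v i => simp [Lam.skel] at hss
    | l s₀ => simp [Lam.skel] at hss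
    | a s₁ s₂ =>
      cases t with
      | v j => simp [Lam.skel] at hts
      | l t₀ => simp [Lam.skel] at hts
      | a t₁ t₂ =>
        simp [Lam.skel] at hss hts
        exact congrArg₂ Lam.a
          (closed_unique Y d h.1 s₁ t₁ hs.1 hss.1 ht.1 hts.1)
          (closed_unique Z d h.2 s₂ t₂ hs.2 hss.2 ht.2 hts.2)

lemma Mot.not_good_two : ∀ (X : Mot) (d : ℕ) (t : Lam), t.closedAt d → t.skel = X →
    ¬ X.good d → ∃ t' : Lam, t' ≠ t ∧ t'.closedAt d ∧ t'.skel = X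
  | .v, d, t, ht, hts, h => by
    cases t with
    | v i =>
      have hd : ¬ d = 1 := by simpa [Mot.good] using h
      have hi : i < d := ht
      refine ⟨.v (if i = 0 then 1 else 0), ?_, ?_, rfl⟩
      · simp only [ne_eq, Lam.v.injEq]; split <;> omega
      · simp only [Lam.closedAt]; split <;> omega
    | l t => simp [Lam.skel] at hts
    | a s t => simp [Lam.skel] at hts
  | .l Y, d, t, ht, hts, h => by
    cases t with
    | v i => simp [Lam.skel] at hts
    | l t₀ =>
      simp [Lam.skel] at hts
      obtain ⟨t', hne, hc, hsk⟩ := not_good_two Y (d+1) t₀ ht hts h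
      exact ⟨.l t', by simpa using hne, hc, by simp [Lam.skel, hsk]⟩
    | a s t => simp [Lam.skel] at hts
  | .a Y Z, d, t, ht, hts, h => by
    cases t with
    | v i => simp [Lam.skel] at hts
    | l t₀ => simp [Lam.skel] at hts
    | a t₁ t₂ =>
      simp [Lam.skel] at hts
      by_cases hY : Y.good d
      · have hZ : ¬ Z.good d := fun hZ => h ⟨hY, hZ⟩
        obtain ⟨t', hne, hc, hsk⟩ := not_good_two Z d t₂ ht.2 hts.2 hZ
        exact ⟨.a t₁ t', by intro hEq; injection hEq with h1 h2; exact hne h2, ⟨ht.1, hc⟩, by simp [Lam.skel, hts.1, hsk]⟩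
      · obtain ⟨t', hne, hc, hsk⟩ := not_good_two Y d t₁ ht.1 hts.1 hY
        exact ⟨.a t' t₂, by intro hEq; injection hEq with h1 h2; exact hne h1, ⟨hc, ht.2⟩, by simp [Lam.skel, hts.2, hsk]⟩

theorem Mot.uc_iff_good (X : Mot) : X.UniquelyClosable ↔ X.good 0 := by
  constructor
  · rintro ⟨t, ⟨ht, hts⟩, hu⟩
    by_contra hng
    obtain ⟨t', hne, hc, hsk⟩ := Mot.not_good_two X 0 t ht hts hng
    exact hne (hu t' ⟨hc, hsk⟩)
  · intro h
    exact ⟨X.fill, ⟨Mot.fill_closed X 0 h, Mot.skel_fill X⟩,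
      fun y hy => Mot.closed_unique X 0 h y X.fill hy.1 hy.2
        (Mot.fill_closed X 0 h) (Mot.skel_fill X)⟩

lemma Mot.nodes_pos : ∀ t : Mot, 0 < t.nodes
  | .v => Nat.one_pos
  | .l t => by simp [Mot.nodes]
  | .a s t => by simp [Mot.nodes]

lemma Mot.not_good_ge2 : ∀ (t : Mot) (d : ℕ), 2 ≤ d → ¬ t.good d
  | .v, d, hd => by simp [Mot.good]; omega
  | .l t, d, hd => Mot.not_good_ge2 t (d+1) (by omega)
  | .a s t, d, hd => fun h => Mot.not_good_ge2 s d hd h.1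

def lc : ℕ → List Mot
  | 0 => []
  | 1 => [Mot.v]
  | (n+2) =>
    (List.range (n+2)).attach.flatMap fun i =>
      (lc i.1).flatMap fun s => (lc (n+1-i.1)).map fun t => Mot.a s t
decreasing_by
  · omega
  · exact List.mem_range.mp i.2

def la : ℕ → List Mot
  | 0 => []
  | (n+1) =>
    (lc n).map Mot.l ++
    ((List.range (n+1)).attach.flatMap fun i =>
      (la i.1).flatMap fun s => (la (n-i.1)).map fun t => Mot.a s t)
decreasing_by
  · omega
  · exact List.mem_range.mp i.2

lemma mem_lc : ∀ (n : ℕ) (t : Mot), t ∈ lc n ↔ t.nodes = n ∧ t.good 1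
  | 0, t => by
    simp only [lc, List.not_mem_nil, false_iff, not_and]
    intro h
    have := t.nodes_pos
    omega
  | 1, t => by
    cases t with
    | v => simp [lc, Mot.nodes, Mot.good]
    | l s =>
      simp only [lc, List.mem_singleton]
      constructor
      · intro h; simp at h
      · rintro ⟨h, -⟩; have := s.nodes_pos; simp [Mot.nodes] at h; omega
    | a s₁ s₂ =>
      simp only [lc, List.mem_singleton]
      have := s₁.nodes_pos; have := s₂.nodes_pos
      constructor
      · intro h; simp at h
      · rintro ⟨h, -⟩; simp [Mot.nodes] at h; omega
  | (n+2), t => by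
    rw [lc]
    simp only [List.mem_flatMap, List.mem_attach, List.mem_map, true_and, Subtype.exists]
    constructor
    · rintro ⟨i, hi, s, hs, t₂, ht₂, rfl⟩
      have hi' := List.mem_range.mp hi
      rw [mem_lc i s] at hs
      rw [mem_lc (n+1-i) t₂] at ht₂
      refine ⟨?_, hs.2, ht₂.2⟩
      show 1 + s.nodes + t₂.nodes = _
      omega
    · intro h
      cases t with
      | v => simp [Mot.nodes] at h
      | l s => exact absurd h.2 (Mot.not_good_ge2 s 2 le_rfl)
      | a s₁ s₂ =>
        obtain ⟨hn, h1, h2⟩ := h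
        have hn' : 1 + s₁.nodes + s₂.nodes = n + 2 := hn
        have h2' := s₂.nodes_pos
        exact ⟨s₁.nodes, List.mem_range.mpr (by omega), s₁,
          (mem_lc s₁.nodes s₁).mpr ⟨rfl, h1⟩, s₂,
          (mem_lc (n+1-s₁.nodes) s₂).mpr ⟨by omega, h2⟩, rfl⟩
termination_by n _ => n
decreasing_by all_goals omega

lemma mem_la : ∀ (n : ℕ) (t : Mot), t ∈ la n ↔ t.nodes = n ∧ t.good 0
  | 0, t => by
    simp only [la, List.not_mem_nil, false_iff, not_and]
    intro h
    have := t.nodes_pos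
    omega
  | (n+1), t => by
    rw [la]
    simp only [List.mem_append, List.mem_map, List.mem_flatMap, List.mem_attach, true_and,
      Subtype.exists]
    constructor
    · rintro (⟨s, hs, rfl⟩ | ⟨i, hi, s, hs, t₂, ht₂, rfl⟩)
      · rw [mem_lc n s] at hs
        exact ⟨by simp only [Mot.nodes, hs.1]; omega, hs.2⟩
      · have hi' := List.mem_range.mp hi
        rw [mem_la i s] at hs
        rw [mem_la (n-i) t₂] at ht₂
        refine ⟨?_, hs.2, ht₂.2⟩
        show 1 + s.nodes + t₂.nodes = _
        omega
    · intro h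
      cases t with
      | v =>
        exfalso
        have : (0 : ℕ) = 1 := h.2
        omega
      | l s =>
        left
        refine ⟨s, (mem_lc n s).mpr ⟨?_, h.2⟩, rfl⟩
        have hn : 1 + s.nodes = n + 1 := h.1
        omega
      | a s₁ s₂ =>
        right
        obtain ⟨hn, h1, h2⟩ := h
        have hn' : 1 + s₁.nodes + s₂.nodes = n + 1 := hn
        have h2' := s₂.nodes_pos
        exact ⟨s₁.nodes, List.mem_range.mpr (by omega), s₁,
          (mem_la s₁.nodes s₁).mpr ⟨rfl, h1⟩, s₂,
          (mem_la (n-s₁.nodes) s₂).mpr ⟨by omega, h2⟩, rfl⟩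
termination_by n _ => n
decreasing_by all_goals omega

lemma nodup_aux {m : ℕ} (g : ℕ → List Mot) (h2 : ℕ → ℕ)
    (hg : ∀ i < m, (g i).Nodup) (hg2 : ∀ i < m, (g (h2 i)).Nodup)
    (hmem : ∀ i < m, ∀ t, t ∈ g i → t.nodes = i) :
    ((List.range m).attach.flatMap fun i =>
      (g i.1).flatMap fun s => (g (h2 i.1)).map fun t => Mot.a s t).Nodup := by
  rw [List.nodup_flatMap]
  constructor
  · intro x _
    have hx := List.mem_range.mp x.2
    rw [List.nodup_flatMap]
    constructor
    · intro s _
      exact (hg2 x.1 hx).map (fun t₁ t₂ h => by injection h)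
    · refine (hg x.1 hx).imp ?_
      intro s₁ s₂ hne y hy₁ hy₂
      simp only [List.mem_map] at hy₁ hy₂
      obtain ⟨t₁, -, rfl⟩ := hy₁
      obtain ⟨t₂, -, he⟩ := hy₂
      injection he.symm with e1 e2
      exact hne e1
  · refine (List.nodup_attach.mpr List.nodup_range).imp ?_
    intro a b hne y hy₁ hy₂
    simp only [List.mem_flatMap, List.mem_map] at hy₁ hy₂
    obtain ⟨s₁, hs₁, t₁, -, rfl⟩ := hy₁
    obtain ⟨s₂, hs₂, t₂, -, he⟩ := hy₂
    injection he.symm with e1 e2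
    subst e1
    have ha := List.mem_range.mp a.2
    have hb := List.mem_range.mp b.2
    exact hne (Subtype.ext ((hmem _ ha _ hs₁).symm.trans (hmem _ hb _ hs₂)))

lemma nodup_lc : ∀ n, (lc n).Nodup
  | 0 => by simp [lc]
  | 1 => by simp [lc]
  | (n+2) => by
    rw [lc]
    exact nodup_aux (fun i => lc i) (fun i => n+1-i)
      (fun i hi => nodup_lc i) (fun i hi => nodup_lc (n+1-i))
      (fun i hi t ht => ((mem_lc i t).mp ht).1)
termination_by n => n
decreasing_by all_goals omega

lemma nodup_la : ∀ n, (la n).Nodup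
  | 0 => by simp [la]
  | (n+1) => by
    rw [la]
    rw [List.nodup_append]
    refine ⟨(nodup_lc n).map (fun t₁ t₂ h => by injection h),
      nodup_aux (fun i => la i) (fun i => n-i)
        (fun i hi => nodup_la i) (fun i hi => nodup_la (n-i))
        (fun i hi t ht => ((mem_la i t).mp ht).1), ?_⟩
    intro y hy₁ b hy₂ hyb
    subst hyb
    simp only [List.mem_map] at hy₁
    obtain ⟨s, -, rfl⟩ := hy₁
    simp only [List.mem_flatMap, List.mem_map] at hy₂
    obtain ⟨i, -, s₂, -, t₂, -, he⟩ := hy₂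
    exact Mot.noConfusion he
termination_by n => n
decreasing_by all_goals omega

lemma u_eq_length (n : ℕ) : u n = (la n).length := by
  rw [u]
  have e : {t : Mot // t.nodes = n ∧ t.UniquelyClosable} ≃ {t : Mot // t ∈ (la n).toFinset} :=
    Equiv.subtypeEquivRight (fun t => by
      rw [List.mem_toFinset, mem_la n t, Mot.uc_iff_good])
  rw [Nat.card_congr e, Nat.card_eq_fintype_card, Fintype.card_coe]
  exact List.toFinset_card_of_nodup (nodup_la n)

lemma list_sum_range (m : ℕ) (h : ℕ → ℕ) :
    ((List.range m).map h).sum = ∑ i ∈ Finset.range m, h i := by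
  induction m with
  | zero => simp
  | succ k ih =>
    rw [List.range_succ, Finset.sum_range_succ, List.map_append, List.sum_append, ih]
    simp

lemma len_aux (m : ℕ) (g : ℕ → List Mot) (h2 : ℕ → ℕ) :
    ((List.range m).attach.flatMap fun i =>
      (g i.1).flatMap fun s => (g (h2 i.1)).map fun t => Mot.a s t).length
    = ∑ i ∈ Finset.range m, (g i).length * (g (h2 i)).length := by
  rw [List.length_flatMap]
  have e1 : (List.map (List.length ∘ fun i : {x // x ∈ List.range m} =>
        (g i.1).flatMap fun s => (g (h2 i.1)).map fun t => Mot.a s t) (List.range m).attach)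
      = List.map ((fun i => (g i).length * (g (h2 i)).length) ∘ Subtype.val)
          (List.range m).attach := by
    apply List.map_congr_left
    intro x hx
    simp only [Function.comp_apply, List.length_flatMap, List.map_map]
    have e2 : (List.map (List.length ∘ fun s => (g (h2 x.1)).map fun t => Mot.a s t) (g x.1))
        = List.map (fun _ => (g (h2 x.1)).length) (g x.1) := by
      apply List.map_congr_left
      intro s hs
      simp
    erw [e2, List.map_const', List.sum_replicate, smul_eq_mul]
  erw [e1, ← List.map_map, List.attach_map_subtype_val, list_sum_range]

lemma len_lc (n : ℕ) :
    (lc (n+2)).length = ∑ i ∈ Finset.range (n+2), (lc i).length * (lc (n+1-i)).length := by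
  rw [lc]; exact len_aux _ _ _

lemma len_la (n : ℕ) :
    (la (n+1)).length
      = (lc n).length + ∑ i ∈ Finset.range (n+1), (la i).length * (la (n-i)).length := by
  rw [la, List.length_append, List.length_map, len_aux]

lemma lcL0 : (lc 0).length = 0 := by simp [lc]
lemma lcL1 : (lc 1).length = 1 := by simp [lc]
lemma lcL2 : (lc 2).length = 0 := by
  rw [show (2:ℕ) = 0+2 from rfl, len_lc]
  simp [Finset.sum_range_succ, lcL0, lcL1]
lemma lcL3 : (lc 3).length = 1 := by
  rw [show (3:ℕ) = 1+2 from rfl, len_lc]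
  simp [Finset.sum_range_succ, lcL0, lcL1, lcL2]
lemma lcL4 : (lc 4).length = 0 := by
  rw [show (4:ℕ) = 2+2 from rfl, len_lc]
  simp [Finset.sum_range_succ, lcL0, lcL1, lcL2, lcL3]
lemma lcL5 : (lc 5).length = 2 := by
  rw [show (5:ℕ) = 3+2 from rfl, len_lc]
  simp [Finset.sum_range_succ, lcL0, lcL1, lcL2, lcL3, lcL4]
lemma lcL6 : (lc 6).length = 0 := by
  rw [show (6:ℕ) = 4+2 from rfl, len_lc]
  simp [Finset.sum_range_succ, lcL0, lcL1, lcL2, lcL3, lcL4, lcL5]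
lemma lcL7 : (lc 7).length = 5 := by
  rw [show (7:ℕ) = 5+2 from rfl, len_lc]
  simp [Finset.sum_range_succ, lcL0, lcL1, lcL2, lcL3, lcL4, lcL5, lcL6]
lemma lcL8 : (lc 8).length = 0 := by
  rw [show (8:ℕ) = 6+2 from rfl, len_lc]
  simp [Finset.sum_range_succ, lcL0, lcL1, lcL2, lcL3, lcL4, lcL5, lcL6, lcL7]
lemma laL0 : (la 0).length = 0 := by simp [la]
lemma laL1 : (la 1).length = 0 := by
  rw [show (1:ℕ) = 0+1 from rfl, len_la]
  simp [Finset.sum_range_succ, laL0, lcL0]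
lemma laL2 : (la 2).length = 1 := by
  rw [show (2:ℕ) = 1+1 from rfl, len_la]
  simp [Finset.sum_range_succ, laL0, laL1, lcL1]
lemma laL3 : (la 3).length = 0 := by
  rw [show (3:ℕ) = 2+1 from rfl, len_la]
  simp [Finset.sum_range_succ, laL0, laL1, laL2, lcL2]
lemma laL4 : (la 4).length = 1 := by
  rw [show (4:ℕ) = 3+1 from rfl, len_la]
  simp [Finset.sum_range_succ, laL0, laL1, laL2, laL3, lcL3]
lemma laL5 : (la 5).length = 1 := by
  rw [show (5:ℕ) = 4+1 from rfl, len_la]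
  simp [Finset.sum_range_succ, laL0, laL1, laL2, laL3, laL4, lcL4]
lemma laL6 : (la 6).length = 2 := by
  rw [show (6:ℕ) = 5+1 from rfl, len_la]
  simp [Finset.sum_range_succ, laL0, laL1, laL2, laL3, laL4, laL5, lcL5]
lemma laL7 : (la 7).length = 2 := by
  rw [show (7:ℕ) = 6+1 from rfl, len_la]
  simp [Finset.sum_range_succ, laL0, laL1, laL2, laL3, laL4, laL5, laL6, lcL6]
lemma laL8 : (la 8).length = 7 := by
  rw [show (8:ℕ) = 7+1 from rfl, len_la]
  simp [Finset.sum_range_succ, laL0, laL1, laL2, laL3, laL4, laL5, laL6, laL7, lcL7]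
lemma laL9 : (la 9).length = 5 := by
  rw [show (9:ℕ) = 8+1 from rfl, len_la]
  simp [Finset.sum_range_succ, laL0, laL1, laL2, laL3, laL4, laL5, laL6, laL7, laL8, lcL8]

open PowerSeries

noncomputable def Cs : ℚ⟦X⟧ := PowerSeries.mk fun n => ((lc n).length : ℚ)
noncomputable def Fs : ℚ⟦X⟧ := PowerSeries.mk fun n => ((la n).length : ℚ)

lemma coeff_Cs (n : ℕ) : (coeff n) Cs = ((lc n).length : ℚ) := coeff_mk n _
lemma coeff_Fs (n : ℕ) : (coeff n) Fs = ((la n).length : ℚ) := coeff_mk n _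

lemma hCs : Cs = X + X * Cs ^ 2 := by
  ext n
  rw [map_add]
  cases n with
  | zero => simp [coeff_Cs, lcL0]
  | succ m =>
    rw [sq, coeff_succ_X_mul, PowerSeries.coeff_mul,
      Finset.Nat.sum_antidiagonal_eq_sum_range_succ_mk]
    simp only [coeff_Cs, coeff_X]
    cases m with
    | zero => simp [lcL0, lcL1]
    | succ k =>
      rw [len_lc k]
      push_cast
      simp

lemma hFs : Fs = X * Cs + X * Fs ^ 2 := by
  ext n
  rw [map_add]
  cases n with
  | zero => simp [coeff_Fs, laL0]
  | succ m =>
    rw [sq, coeff_succ_X_mul, coeff_succ_X_mul, PowerSeries.coeff_mul,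
      Finset.Nat.sum_antidiagonal_eq_sum_range_succ_mk]
    simp only [coeff_Fs, coeff_Cs]
    rw [len_la m]
    push_cast
    simp

lemma hP : Fs - X * Fs ^ 2 - (Fs - X * Fs ^ 2) ^ 2 - X ^ 2 = 0 := by
  have hXG : X * Cs = Fs - X * Fs ^ 2 := by linear_combination -hFs
  have key : X * Cs = X ^ 2 + (X * Cs) ^ 2 := by linear_combination X * hCs
  linear_combination key + (Fs - X * Fs ^ 2 + X * Cs - 1) * hXG

lemma D_ofNat (n : ℕ) [Nat.AtLeastTwo n] :
    (d⁄dX ℚ) (no_index (OfNat.ofNat n) : ℚ⟦X⟧) = 0 := by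
  rw [← Nat.cast_ofNat]
  exact Derivation.map_natCast (d⁄dX ℚ) n

lemma hE1 : (d⁄dX ℚ Fs) + (-2 : ℚ⟦X⟧) * Fs * (d⁄dX ℚ Fs) + (-1 : ℚ⟦X⟧) * Fs ^ 2 + (2 : ℚ⟦X⟧) * Fs ^ 3 + (-2 : ℚ⟦X⟧) * (X:ℚ⟦X⟧) + (-2 : ℚ⟦X⟧) * (X:ℚ⟦X⟧) * Fs * (d⁄dX ℚ Fs) + (6 : ℚ⟦X⟧) * (X:ℚ⟦X⟧) * Fs ^ 2 * (d⁄dX ℚ Fs) + (-2 : ℚ⟦X⟧) * (X:ℚ⟦X⟧) * Fs ^ 4 + (-4 : ℚ⟦X⟧) * (X:ℚ⟦X⟧) ^ 2 * Fs ^ 3 * (d⁄dX ℚ Fs) = 0 := by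
  have h := congrArg (d⁄dX ℚ) hP
  simp only [map_sub, map_add, Derivation.leibniz, Derivation.leibniz_pow, derivative_X,
    map_zero, smul_eq_mul, nsmul_eq_mul, map_pow, Nat.cast_ofNat, pow_one, Nat.sub_self,
    pow_zero, one_mul, mul_one, Nat.cast_one, D_ofNat, Derivation.map_one_eq_zero, map_neg,
    smul_zero, zero_mul, mul_zero, add_zero, zero_add, neg_zero] at h
  linear_combination h

lemma hE2 : (-2 : ℚ⟦X⟧) + (d⁄dX ℚ (d⁄dX ℚ Fs)) + (-2 : ℚ⟦X⟧) * (d⁄dX ℚ Fs) ^ 2 + (-2 : ℚ⟦X⟧) * Fs * (d⁄dX ℚ (d⁄dX ℚ Fs)) + (-4 : ℚ⟦X⟧) * Fs * (d⁄dX ℚ Fs) + (12 : ℚ⟦X⟧) * Fs ^ 2 * (d⁄dX ℚ Fs) + (-2 : ℚ⟦X⟧) * Fs ^ 4 + (-2 : ℚ⟦X⟧) * (X:ℚ⟦X⟧) * (d⁄dX ℚ Fs) ^ 2 + (-2 : ℚ⟦X⟧) * (X:ℚ⟦X⟧) * Fs * (d⁄dX ℚ (d⁄dX ℚ Fs)) +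 (12 : ℚ⟦X⟧) * (X:ℚ⟦X⟧) * Fs * (d⁄dX ℚ Fs) ^ 2 + (6 : ℚ⟦X⟧) * (X:ℚ⟦X⟧) * Fs ^ 2 * (d⁄dX ℚ (d⁄dX ℚ Fs)) + (-16 : ℚ⟦X⟧) * (X:ℚ⟦X⟧) * Fs ^ 3 * (d⁄dX ℚ Fs) + (-12 : ℚ⟦X⟧) * (X:ℚ⟦X⟧) ^ 2 * Fs ^ 2 * (d⁄dX ℚ Fs) ^ 2 + (-4 : ℚ⟦X⟧) * (X:ℚ⟦X⟧) ^ 2 * Fs ^ 3 * (d⁄dX ℚ (d⁄dX ℚ Fs)) = 0 := by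
  have h := congrArg (d⁄dX ℚ) hE1
  simp only [map_sub, map_add, Derivation.leibniz, Derivation.leibniz_pow, derivative_X,
    map_zero, smul_eq_mul, nsmul_eq_mul, map_pow, Nat.cast_ofNat, pow_one, Nat.sub_self,
    pow_zero, one_mul, mul_one, Nat.cast_one  , D_ofNat, Derivation.map_one_eq_zero, map_neg, smul_zero,
    zero_mul, mul_zero, add_zero, zero_add, neg_zero] at h
  norm_num [D_ofNat] at h
  linear_combination h

lemma hKey : (X:ℚ⟦X⟧) ^ 14 * ((1 : ℚ⟦X⟧) + (-2 : ℚ⟦X⟧) * Fs + (-2 : ℚ⟦X⟧) * (X:ℚ⟦X⟧) * Fs + (6 : ℚ⟦X⟧) * (X:ℚ⟦X⟧) * Fs ^ 2 + (-4 : ℚ⟦X⟧) * (X:ℚ⟦X⟧) ^ 2 * Fs ^ 3) ^ 3 * (((2 : ℚ⟦X⟧) * (X:ℚ⟦X⟧) * (d⁄dX ℚ Fs) + (-2 : ℚ⟦X⟧) * (X:ℚ⟦X⟧) * Fs + (X:ℚ⟦X⟧) ^ 2 * (d⁄dX ℚ (d⁄dX ℚ Fs)) + (-6 : ℚ⟦X⟧)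 * (X:ℚ⟦X⟧) ^ 2 * (d⁄dX ℚ Fs) + (8 : ℚ⟦X⟧) * (X:ℚ⟦X⟧) ^ 2 * Fs + (-2 : ℚ⟦X⟧) * (X:ℚ⟦X⟧) ^ 3 * (d⁄dX ℚ (d⁄dX ℚ Fs)) + (-24 : ℚ⟦X⟧) * (X:ℚ⟦X⟧) ^ 3 * (d⁄dX ℚ Fs) + (-20 : ℚ⟦X⟧) * (X:ℚ⟦X⟧) ^ 3 * Fs + (-16 : ℚ⟦X⟧) * (X:ℚ⟦X⟧) ^ 4 * (d⁄dX ℚ (d⁄dX ℚ Fs)) + (16 : ℚ⟦X⟧) * (X:ℚ⟦X⟧) ^ 4 * (d⁄dX ℚ Fs) + (-20 : ℚ⟦X⟧) * (X:ℚ⟦X⟧) ^ 4 * Fs + (24 : ℚ⟦X⟧) * (X:ℚ⟦X⟧) ^ 5 * (d⁄dX ℚ (d⁄dX ℚ Fs)) + (144 : ℚ⟦X⟧) * (X:ℚ⟦X⟧) ^ 5 * (d⁄dX ℚ Fs) + (56 : ℚ⟦X⟧) * (X:ℚ⟦X⟧) ^ 5 * Fs + (64 : ℚ⟦X⟧) *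 (X:ℚ⟦X⟧) ^ 6 * (d⁄dX ℚ (d⁄dX ℚ Fs)) + (96 : ℚ⟦X⟧) * (X:ℚ⟦X⟧) ^ 6 * (d⁄dX ℚ Fs) + (16 : ℚ⟦X⟧) * (X:ℚ⟦X⟧) ^ 6 * Fs + (-32 : ℚ⟦X⟧) * (X:ℚ⟦X⟧) ^ 7 * (d⁄dX ℚ (d⁄dX ℚ Fs)) + (-320 : ℚ⟦X⟧) * (X:ℚ⟦X⟧) ^ 7 * (d⁄dX ℚ Fs) + (-128 : ℚ⟦X⟧) * (X:ℚ⟦X⟧) ^ 8 * (d⁄dX ℚ (d⁄dX ℚ Fs)) + (-512 : ℚ⟦X⟧) * (X:ℚ⟦X⟧) ^ 8 * (d⁄dX ℚ Fs) + (-128 : ℚ⟦X⟧) * (X:ℚ⟦X⟧) ^ 9 * (d⁄dX ℚ (d⁄dX ℚ Fs)) + (512 : ℚ⟦X⟧) * (X:ℚ⟦X⟧) ^ 9 * (d⁄dX ℚ Fs) + (256 : ℚ⟦X⟧) * (X:ℚ⟦X⟧) ^ 10 * (d⁄dX ℚ (d⁄dX ℚ Fs))) - ((6 : ℚ⟦X⟧)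 * (X:ℚ⟦X⟧) ^ 2 + (-18 : ℚ⟦X⟧) * (X:ℚ⟦X⟧) ^ 3 + (-52 : ℚ⟦X⟧) * (X:ℚ⟦X⟧) ^ 4 + (40 : ℚ⟦X⟧) * (X:ℚ⟦X⟧) ^ 5 + (128 : ℚ⟦X⟧) * (X:ℚ⟦X⟧) ^ 6)) = 0 := by
  linear_combination ((2 : ℚ⟦X⟧) * (X:ℚ⟦X⟧) ^ 15 + (-8 : ℚ⟦X⟧) * (X:ℚ⟦X⟧) ^ 15 * Fs + (8 : ℚ⟦X⟧) * (X:ℚ⟦X⟧) ^ 15 * Fs ^ 2 + (-6 : ℚ⟦X⟧) * (X:ℚ⟦X⟧) ^ 16 + (2 : ℚ⟦X⟧) * (X:ℚ⟦X⟧) ^ 16 * (d⁄dX ℚ Fs) + (20 : ℚ⟦X⟧) * (X:ℚ⟦X⟧) ^ 16 * Fs + (-4 : ℚ⟦X⟧) * (X:ℚ⟦X⟧) ^ 16 * Fs * (d⁄dX ℚ Fs) + (-2 : ℚ⟦X⟧) * (X:ℚ⟦X⟧) ^ 16 * Fs ^ 2 + (-28 : ℚ⟦X⟧) * (X:ℚ⟦X⟧)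 ^ 16 * Fs ^ 3 + (-20 : ℚ⟦X⟧) * (X:ℚ⟦X⟧) ^ 17 + (-2 : ℚ⟦X⟧) * (X:ℚ⟦X⟧) ^ 17 * (d⁄dX ℚ Fs) + (112 : ℚ⟦X⟧) * (X:ℚ⟦X⟧) ^ 17 * Fs + (-12 : ℚ⟦X⟧) * (X:ℚ⟦X⟧) ^ 17 * Fs * (d⁄dX ℚ Fs) + (-178 : ℚ⟦X⟧) * (X:ℚ⟦X⟧) ^ 17 * Fs ^ 2 + (36 : ℚ⟦X⟧) * (X:ℚ⟦X⟧) ^ 17 * Fs ^ 2 * (d⁄dX ℚ Fs) + (88 : ℚ⟦X⟧) * (X:ℚ⟦X⟧) ^ 17 * Fs ^ 3 + (28 : ℚ⟦X⟧) * (X:ℚ⟦X⟧) ^ 17 * Fs ^ 4 + (12 : ℚ⟦X⟧) * (X:ℚ⟦X⟧) ^ 18 + (-36 : ℚ⟦X⟧) * (X:ℚ⟦X⟧) ^ 18 * (d⁄dX ℚ Fs) + (-56 : ℚ⟦X⟧) * (X:ℚ⟦X⟧) ^ 18 * Fs + (100 : ℚ⟦X⟧) * (X:ℚ⟦X⟧)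 ^ 18 * Fs * (d⁄dX ℚ Fs) + (-140 : ℚ⟦X⟧) * (X:ℚ⟦X⟧) ^ 18 * Fs ^ 2 + (-24 : ℚ⟦X⟧) * (X:ℚ⟦X⟧) ^ 18 * Fs ^ 2 * (d⁄dX ℚ Fs) + (352 : ℚ⟦X⟧) * (X:ℚ⟦X⟧) ^ 18 * Fs ^ 3 + (-104 : ℚ⟦X⟧) * (X:ℚ⟦X⟧) ^ 18 * Fs ^ 3 * (d⁄dX ℚ Fs) + (-160 : ℚ⟦X⟧) * (X:ℚ⟦X⟧) ^ 18 * Fs ^ 4 + (72 : ℚ⟦X⟧) * (X:ℚ⟦X⟧) ^ 19 + (16 : ℚ⟦X⟧) * (X:ℚ⟦X⟧) ^ 19 * (d⁄dX ℚ Fs) + (-496 : ℚ⟦X⟧) * (X:ℚ⟦X⟧) ^ 19 * Fs + (232 : ℚ⟦X⟧) * (X:ℚ⟦X⟧) ^ 19 * Fs * (d⁄dX ℚ Fs) + (488 : ℚ⟦X⟧) * (X:ℚ⟦X⟧) ^ 19 * Fs ^ 2 + (-672 : ℚ⟦X⟧) * (X:ℚ⟦X⟧) ^ 19 * Fs ^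 2 * (d⁄dX ℚ Fs) + (96 : ℚ⟦X⟧) * (X:ℚ⟦X⟧) ^ 19 * Fs ^ 3 + (176 : ℚ⟦X⟧) * (X:ℚ⟦X⟧) ^ 19 * Fs ^ 3 * (d⁄dX ℚ Fs) + (-64 : ℚ⟦X⟧) * (X:ℚ⟦X⟧) ^ 19 * Fs ^ 4 + (120 : ℚ⟦X⟧) * (X:ℚ⟦X⟧) ^ 19 * Fs ^ 4 * (d⁄dX ℚ Fs) + (96 : ℚ⟦X⟧) * (X:ℚ⟦X⟧) ^ 19 * Fs ^ 5 + (-8 : ℚ⟦X⟧) * (X:ℚ⟦X⟧) ^ 19 * Fs ^ 6 + (128 : ℚ⟦X⟧) * (X:ℚ⟦X⟧) ^ 20 + (176 : ℚ⟦X⟧) * (X:ℚ⟦X⟧) ^ 20 * (d⁄dX ℚ Fs) + (-320 : ℚ⟦X⟧) * (X:ℚ⟦X⟧) ^ 20 * Fs + (-672 : ℚ⟦X⟧) * (X:ℚ⟦X⟧) ^ 20 * Fs * (d⁄dX ℚ Fs) + (1984 : ℚ⟦X⟧) * (X:ℚ⟦X⟧) ^ 20 * Fs ^ 2 + (96 :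 ℚ⟦X⟧) * (X:ℚ⟦X⟧) ^ 20 * Fs ^ 2 * (d⁄dX ℚ Fs) + (-1536 : ℚ⟦X⟧) * (X:ℚ⟦X⟧) ^ 20 * Fs ^ 3 + (1728 : ℚ⟦X⟧) * (X:ℚ⟦X⟧) ^ 20 * Fs ^ 3 * (d⁄dX ℚ Fs) + (-864 : ℚ⟦X⟧) * (X:ℚ⟦X⟧) ^ 20 * Fs ^ 4 + (-240 : ℚ⟦X⟧) * (X:ℚ⟦X⟧) ^ 20 * Fs ^ 4 * (d⁄dX ℚ Fs) + (-384 : ℚ⟦X⟧) * (X:ℚ⟦X⟧) ^ 20 * Fs ^ 5 + (-48 : ℚ⟦X⟧) * (X:ℚ⟦X⟧) ^ 20 * Fs ^ 5 * (d⁄dX ℚ Fs) + (-16 : ℚ⟦X⟧) * (X:ℚ⟦X⟧) ^ 20 * Fs ^ 6 + (32 : ℚ⟦X⟧) * (X:ℚ⟦X⟧) ^ 21 + (64 : ℚ⟦X⟧) * (X:ℚ⟦X⟧) ^ 21 * (d⁄dX ℚ Fs) + (192 : ℚ⟦X⟧) * (X:ℚ⟦X⟧) ^ 21 * Fs + (-1248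 : ℚ⟦X⟧) * (X:ℚ⟦X⟧) ^ 21 * Fs * (d⁄dX ℚ Fs) + (1024 : ℚ⟦X⟧) * (X:ℚ⟦X⟧) ^ 21 * Fs ^ 2 + (3456 : ℚ⟦X⟧) * (X:ℚ⟦X⟧) ^ 21 * Fs ^ 2 * (d⁄dX ℚ Fs) + (-4480 : ℚ⟦X⟧) * (X:ℚ⟦X⟧) ^ 21 * Fs ^ 3 + (-1984 : ℚ⟦X⟧) * (X:ℚ⟦X⟧) ^ 21 * Fs ^ 3 * (d⁄dX ℚ Fs) + (2112 : ℚ⟦X⟧) * (X:ℚ⟦X⟧) ^ 21 * Fs ^ 4 + (-1920 : ℚ⟦X⟧) * (X:ℚ⟦X⟧) ^ 21 * Fs ^ 4 * (d⁄dX ℚ Fs) + (1536 : ℚ⟦X⟧) * (X:ℚ⟦X⟧) ^ 21 * Fs ^ 5 + (96 : ℚ⟦X⟧) * (X:ℚ⟦X⟧) ^ 21 * Fs ^ 5 * (d⁄dX ℚ Fs) + (256 : ℚ⟦X⟧) * (X:ℚ⟦X⟧) ^ 21 * Fs ^ 6 + (-384 : ℚ⟦X⟧) * (X:ℚ⟦X⟧)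 ^ 22 + (-320 : ℚ⟦X⟧) * (X:ℚ⟦X⟧) ^ 22 * (d⁄dX ℚ Fs) + (1280 : ℚ⟦X⟧) * (X:ℚ⟦X⟧) ^ 22 * Fs + (896 : ℚ⟦X⟧) * (X:ℚ⟦X⟧) ^ 22 * Fs * (d⁄dX ℚ Fs) + (-4992 : ℚ⟦X⟧) * (X:ℚ⟦X⟧) ^ 22 * Fs ^ 2 + (1920 : ℚ⟦X⟧) * (X:ℚ⟦X⟧) ^ 22 * Fs ^ 2 * (d⁄dX ℚ Fs) + (512 : ℚ⟦X⟧) * (X:ℚ⟦X⟧) ^ 22 * Fs ^ 3 + (-7424 : ℚ⟦X⟧) * (X:ℚ⟦X⟧) ^ 22 * Fs ^ 3 * (d⁄dX ℚ Fs) + (7680 : ℚ⟦X⟧) * (X:ℚ⟦X⟧) ^ 22 * Fs ^ 4 + (2880 : ℚ⟦X⟧) * (X:ℚ⟦X⟧) ^ 22 * Fs ^ 4 * (d⁄dX ℚ Fs) + (-768 : ℚ⟦X⟧) * (X:ℚ⟦X⟧) ^ 22 * Fs ^ 5 + (768 : ℚ⟦X⟧) * (X:ℚ⟦X⟧) ^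 22 * Fs ^ 5 * (d⁄dX ℚ Fs) + (-704 : ℚ⟦X⟧) * (X:ℚ⟦X⟧) ^ 22 * Fs ^ 6 + (-128 : ℚ⟦X⟧) * (X:ℚ⟦X⟧) ^ 23 + (-512 : ℚ⟦X⟧) * (X:ℚ⟦X⟧) ^ 23 * (d⁄dX ℚ Fs) + (256 : ℚ⟦X⟧) * (X:ℚ⟦X⟧) ^ 23 * Fs + (3200 : ℚ⟦X⟧) * (X:ℚ⟦X⟧) ^ 23 * Fs * (d⁄dX ℚ Fs) + (-4864 : ℚ⟦X⟧) * (X:ℚ⟦X⟧) ^ 23 * Fs ^ 2 + (-6144 : ℚ⟦X⟧) * (X:ℚ⟦X⟧) ^ 23 * Fs ^ 2 * (d⁄dX ℚ Fs) + (13824 : ℚ⟦X⟧) * (X:ℚ⟦X⟧) ^ 23 * Fs ^ 3 + (1280 : ℚ⟦X⟧) * (X:ℚ⟦X⟧) ^ 23 * Fs ^ 3 * (d⁄dX ℚ Fs) + (-4352 : ℚ⟦X⟧) * (X:ℚ⟦X⟧) ^ 23 * Fs ^ 4 + (7680 : ℚ⟦X⟧) * (X:ℚ⟦X⟧) ^ 23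 * Fs ^ 4 * (d⁄dX ℚ Fs) + (-7680 : ℚ⟦X⟧) * (X:ℚ⟦X⟧) ^ 23 * Fs ^ 5 + (-1152 : ℚ⟦X⟧) * (X:ℚ⟦X⟧) ^ 23 * Fs ^ 5 * (d⁄dX ℚ Fs) + (-256 : ℚ⟦X⟧) * (X:ℚ⟦X⟧) ^ 23 * Fs ^ 6 + (-1024 : ℚ⟦X⟧) * (X:ℚ⟦X⟧) ^ 24 + (256 : ℚ⟦X⟧) * (X:ℚ⟦X⟧) ^ 24 * (d⁄dX ℚ Fs) + (2048 : ℚ⟦X⟧) * (X:ℚ⟦X⟧) ^ 24 * Fs + (2048 : ℚ⟦X⟧) * (X:ℚ⟦X⟧) ^ 24 * Fs * (d⁄dX ℚ Fs) + (3584 : ℚ⟦X⟧) * (X:ℚ⟦X⟧) ^ 24 * Fs ^ 2 + (-10752 : ℚ⟦X⟧) * (X:ℚ⟦X⟧) ^ 24 * Fs ^ 2 * (d⁄dX ℚ Fs) + (3072 : ℚ⟦X⟧) * (X:ℚ⟦X⟧) ^ 24 * Fs ^ 3 + (14336 : ℚ⟦X⟧) * (X:ℚ⟦X⟧) ^ 24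 * Fs ^ 3 * (d⁄dX ℚ Fs) + (-17920 : ℚ⟦X⟧) * (X:ℚ⟦X⟧) ^ 24 * Fs ^ 4 + (-3840 : ℚ⟦X⟧) * (X:ℚ⟦X⟧) ^ 24 * Fs ^ 4 * (d⁄dX ℚ Fs) + (3072 : ℚ⟦X⟧) * (X:ℚ⟦X⟧) ^ 24 * Fs ^ 5 + (-3072 : ℚ⟦X⟧) * (X:ℚ⟦X⟧) ^ 24 * Fs ^ 5 * (d⁄dX ℚ Fs) + (2816 : ℚ⟦X⟧) * (X:ℚ⟦X⟧) ^ 24 * Fs ^ 6 + (512 : ℚ⟦X⟧) * (X:ℚ⟦X⟧) ^ 25 + (512 : ℚ⟦X⟧) * (X:ℚ⟦X⟧) ^ 25 * (d⁄dX ℚ Fs) + (3072 : ℚ⟦X⟧) * (X:ℚ⟦X⟧) ^ 25 * Fs + (-4608 : ℚ⟦X⟧) * (X:ℚ⟦X⟧) ^ 25 * Fs * (d⁄dX ℚ Fs) + (-2560 : ℚ⟦X⟧) * (X:ℚ⟦X⟧) ^ 25 * Fs ^ 2 + (3072 : ℚ⟦X⟧) * (X:ℚ⟦X⟧) ^ 25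 * Fs ^ 2 * (d⁄dX ℚ Fs) + (-4096 : ℚ⟦X⟧) * (X:ℚ⟦X⟧) ^ 25 * Fs ^ 3 + (17408 : ℚ⟦X⟧) * (X:ℚ⟦X⟧) ^ 25 * Fs ^ 3 * (d⁄dX ℚ Fs) + (3072 : ℚ⟦X⟧) * (X:ℚ⟦X⟧) ^ 25 * Fs ^ 4 + (-15360 : ℚ⟦X⟧) * (X:ℚ⟦X⟧) ^ 25 * Fs ^ 4 * (d⁄dX ℚ Fs) + (12288 : ℚ⟦X⟧) * (X:ℚ⟦X⟧) ^ 25 * Fs ^ 5 + (1536 : ℚ⟦X⟧) * (X:ℚ⟦X⟧) ^ 25 * Fs ^ 5 * (d⁄dX ℚ Fs) + (1024 : ℚ⟦X⟧) * (X:ℚ⟦X⟧) ^ 26 + (-6144 : ℚ⟦X⟧) * (X:ℚ⟦X⟧) ^ 26 * Fs + (-1024 : ℚ⟦X⟧) * (X:ℚ⟦X⟧) ^ 26 * Fs * (d⁄dX ℚ Fs) + (-3072 : ℚ⟦X⟧) * (X:ℚ⟦X⟧) ^ 26 * Fs ^ 2 + (12288 : ℚ⟦X⟧) * (X:ℚ⟦X⟧)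 ^ 26 * Fs ^ 2 * (d⁄dX ℚ Fs) + (-22528 : ℚ⟦X⟧) * (X:ℚ⟦X⟧) ^ 26 * Fs ^ 3 * (d⁄dX ℚ Fs) + (-15360 : ℚ⟦X⟧) * (X:ℚ⟦X⟧) ^ 26 * Fs ^ 4 * (d⁄dX ℚ Fs) + (6144 : ℚ⟦X⟧) * (X:ℚ⟦X⟧) ^ 26 * Fs ^ 5 * (d⁄dX ℚ Fs) + (-3072 : ℚ⟦X⟧) * (X:ℚ⟦X⟧) ^ 26 * Fs ^ 6 + (6144 : ℚ⟦X⟧) * (X:ℚ⟦X⟧) ^ 27 * Fs ^ 2 + (-8192 : ℚ⟦X⟧) * (X:ℚ⟦X⟧) ^ 27 * Fs ^ 3 * (d⁄dX ℚ Fs) + (30720 : ℚ⟦X⟧) * (X:ℚ⟦X⟧) ^ 27 * Fs ^ 4 * (d⁄dX ℚ Fs) + (6144 : ℚ⟦X⟧) * (X:ℚ⟦X⟧) ^ 27 * Fs ^ 5 * (d⁄dX ℚ Fs) + (-2048 : ℚ⟦X⟧) * (X:ℚ⟦X⟧) ^ 27 * Fs ^ 6 + (-12288 : ℚ⟦X⟧)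 * (X:ℚ⟦X⟧) ^ 28 * Fs ^ 5 * (d⁄dX ℚ Fs)) * hE1 + ((X:ℚ⟦X⟧) ^ 16 + (-4 : ℚ⟦X⟧) * (X:ℚ⟦X⟧) ^ 16 * Fs + (4 : ℚ⟦X⟧) * (X:ℚ⟦X⟧) ^ 16 * Fs ^ 2 + (-2 : ℚ⟦X⟧) * (X:ℚ⟦X⟧) ^ 17 + (4 : ℚ⟦X⟧) * (X:ℚ⟦X⟧) ^ 17 * Fs + (12 : ℚ⟦X⟧) * (X:ℚ⟦X⟧) ^ 17 * Fs ^ 2 + (-24 : ℚ⟦X⟧) * (X:ℚ⟦X⟧) ^ 17 * Fs ^ 3 + (-16 : ℚ⟦X⟧) * (X:ℚ⟦X⟧) ^ 18 + (72 : ℚ⟦X⟧) * (X:ℚ⟦X⟧) ^ 18 * Fs + (-100 : ℚ⟦X⟧) * (X:ℚ⟦X⟧) ^ 18 * Fs ^ 2 + (16 : ℚ⟦X⟧) * (X:ℚ⟦X⟧) ^ 18 * Fs ^ 3 + (52 : ℚ⟦X⟧) * (X:ℚ⟦X⟧) ^ 18 * Fs ^ 4 + (24 : ℚ⟦X⟧)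 * (X:ℚ⟦X⟧) ^ 19 + (-32 : ℚ⟦X⟧) * (X:ℚ⟦X⟧) ^ 19 * Fs + (-232 : ℚ⟦X⟧) * (X:ℚ⟦X⟧) ^ 19 * Fs ^ 2 + (448 : ℚ⟦X⟧) * (X:ℚ⟦X⟧) ^ 19 * Fs ^ 3 + (-88 : ℚ⟦X⟧) * (X:ℚ⟦X⟧) ^ 19 * Fs ^ 4 + (-48 : ℚ⟦X⟧) * (X:ℚ⟦X⟧) ^ 19 * Fs ^ 5 + (64 : ℚ⟦X⟧) * (X:ℚ⟦X⟧) ^ 20 + (-352 : ℚ⟦X⟧) * (X:ℚ⟦X⟧) ^ 20 * Fs + (672 : ℚ⟦X⟧) * (X:ℚ⟦X⟧) ^ 20 * Fs ^ 2 + (-64 : ℚ⟦X⟧) * (X:ℚ⟦X⟧) ^ 20 * Fs ^ 3 + (-864 : ℚ⟦X⟧) * (X:ℚ⟦X⟧) ^ 20 * Fs ^ 4 + (96 : ℚ⟦X⟧) * (X:ℚ⟦X⟧) ^ 20 * Fs ^ 5 + (16 : ℚ⟦X⟧) * (X:ℚ⟦X⟧) ^ 20 * Fs ^ 6 + (-32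 : ℚ⟦X⟧) * (X:ℚ⟦X⟧) ^ 21 + (-128 : ℚ⟦X⟧) * (X:ℚ⟦X⟧) ^ 21 * Fs + (1248 : ℚ⟦X⟧) * (X:ℚ⟦X⟧) ^ 21 * Fs ^ 2 + (-2304 : ℚ⟦X⟧) * (X:ℚ⟦X⟧) ^ 21 * Fs ^ 3 + (992 : ℚ⟦X⟧) * (X:ℚ⟦X⟧) ^ 21 * Fs ^ 4 + (768 : ℚ⟦X⟧) * (X:ℚ⟦X⟧) ^ 21 * Fs ^ 5 + (-32 : ℚ⟦X⟧) * (X:ℚ⟦X⟧) ^ 21 * Fs ^ 6 + (-128 : ℚ⟦X⟧) * (X:ℚ⟦X⟧) ^ 22 + (640 : ℚ⟦X⟧) * (X:ℚ⟦X⟧) ^ 22 * Fs + (-896 : ℚ⟦X⟧) * (X:ℚ⟦X⟧) ^ 22 * Fs ^ 2 + (-1280 : ℚ⟦X⟧) * (X:ℚ⟦X⟧) ^ 22 * Fs ^ 3 + (3712 : ℚ⟦X⟧) * (X:ℚ⟦X⟧) ^ 22 * Fs ^ 4 + (-1152 : ℚ⟦X⟧) * (X:ℚ⟦X⟧) ^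 22 * Fs ^ 5 + (-256 : ℚ⟦X⟧) * (X:ℚ⟦X⟧) ^ 22 * Fs ^ 6 + (-128 : ℚ⟦X⟧) * (X:ℚ⟦X⟧) ^ 23 + (1024 : ℚ⟦X⟧) * (X:ℚ⟦X⟧) ^ 23 * Fs + (-3200 : ℚ⟦X⟧) * (X:ℚ⟦X⟧) ^ 23 * Fs ^ 2 + (4096 : ℚ⟦X⟧) * (X:ℚ⟦X⟧) ^ 23 * Fs ^ 3 + (-640 : ℚ⟦X⟧) * (X:ℚ⟦X⟧) ^ 23 * Fs ^ 4 + (-3072 : ℚ⟦X⟧) * (X:ℚ⟦X⟧) ^ 23 * Fs ^ 5 + (384 : ℚ⟦X⟧) * (X:ℚ⟦X⟧) ^ 23 * Fs ^ 6 + (256 : ℚ⟦X⟧) * (X:ℚ⟦X⟧) ^ 24 + (-512 : ℚ⟦X⟧) * (X:ℚ⟦X⟧) ^ 24 * Fs + (-2048 : ℚ⟦X⟧) * (X:ℚ⟦X⟧) ^ 24 * Fs ^ 2 + (7168 : ℚ⟦X⟧) * (X:ℚ⟦X⟧) ^ 24 * Fs ^ 3 + (-7168 : ℚ⟦X⟧)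 * (X:ℚ⟦X⟧) ^ 24 * Fs ^ 4 + (1536 : ℚ⟦X⟧) * (X:ℚ⟦X⟧) ^ 24 * Fs ^ 5 + (1024 : ℚ⟦X⟧) * (X:ℚ⟦X⟧) ^ 24 * Fs ^ 6 + (-1024 : ℚ⟦X⟧) * (X:ℚ⟦X⟧) ^ 25 * Fs + (4608 : ℚ⟦X⟧) * (X:ℚ⟦X⟧) ^ 25 * Fs ^ 2 + (-2048 : ℚ⟦X⟧) * (X:ℚ⟦X⟧) ^ 25 * Fs ^ 3 + (-8704 : ℚ⟦X⟧) * (X:ℚ⟦X⟧) ^ 25 * Fs ^ 4 + (6144 : ℚ⟦X⟧) * (X:ℚ⟦X⟧) ^ 25 * Fs ^ 5 + (-512 : ℚ⟦X⟧) * (X:ℚ⟦X⟧) ^ 25 * Fs ^ 6 + (1024 : ℚ⟦X⟧) * (X:ℚ⟦X⟧) ^ 26 * Fs ^ 2 + (-8192 : ℚ⟦X⟧) * (X:ℚ⟦X⟧) ^ 26 * Fs ^ 3 + (11264 : ℚ⟦X⟧) * (X:ℚ⟦X⟧) ^ 26 * Fs ^ 4 + (6144 : ℚ⟦X⟧) *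 (X:ℚ⟦X⟧) ^ 26 * Fs ^ 5 + (-2048 : ℚ⟦X⟧) * (X:ℚ⟦X⟧) ^ 26 * Fs ^ 6 + (4096 : ℚ⟦X⟧) * (X:ℚ⟦X⟧) ^ 27 * Fs ^ 4 + (-12288 : ℚ⟦X⟧) * (X:ℚ⟦X⟧) ^ 27 * Fs ^ 5 + (-2048 : ℚ⟦X⟧) * (X:ℚ⟦X⟧) ^ 27 * Fs ^ 6 + (4096 : ℚ⟦X⟧) * (X:ℚ⟦X⟧) ^ 28 * Fs ^ 6) * hE2 + (-1 : ℚ⟦X⟧) * ((2 : ℚ⟦X⟧) * (X:ℚ⟦X⟧) ^ 15 + (-12 : ℚ⟦X⟧) * (X:ℚ⟦X⟧) ^ 15 * Fs + (24 : ℚ⟦X⟧) * (X:ℚ⟦X⟧) ^ 15 * Fs ^ 2 + (-16 : ℚ⟦X⟧) * (X:ℚ⟦X⟧) ^ 15 * Fs ^ 3 + (-20 : ℚ⟦X⟧) * (X:ℚ⟦X⟧) ^ 16 + (72 : ℚ⟦X⟧) * (X:ℚ⟦X⟧) ^ 16 * Fs + (-36 : ℚ⟦X⟧) * (X:ℚ⟦X⟧)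 ^ 16 * Fs ^ 2 + (-80 : ℚ⟦X⟧) * (X:ℚ⟦X⟧) ^ 16 * Fs ^ 3 + (48 : ℚ⟦X⟧) * (X:ℚ⟦X⟧) ^ 16 * Fs ^ 4 + (32 : ℚ⟦X⟧) * (X:ℚ⟦X⟧) ^ 17 + (-456 : ℚ⟦X⟧) * (X:ℚ⟦X⟧) ^ 17 * Fs ^ 2 + (608 : ℚ⟦X⟧) * (X:ℚ⟦X⟧) ^ 17 * Fs ^ 3 + (120 : ℚ⟦X⟧) * (X:ℚ⟦X⟧) ^ 17 * Fs ^ 4 + (-48 : ℚ⟦X⟧) * (X:ℚ⟦X⟧) ^ 17 * Fs ^ 5 + (144 : ℚ⟦X⟧) * (X:ℚ⟦X⟧) ^ 18 + (-864 : ℚ⟦X⟧) * (X:ℚ⟦X⟧) ^ 18 * Fs + (1344 : ℚ⟦X⟧) * (X:ℚ⟦X⟧) ^ 18 * Fs ^ 2 + (128 : ℚ⟦X⟧) * (X:ℚ⟦X⟧) ^ 18 * Fs ^ 3 + (-1584 : ℚ⟦X⟧) * (X:ℚ⟦X⟧) ^ 18 * Fs ^ 4 + (-96 : ℚ⟦X⟧)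 * (X:ℚ⟦X⟧) ^ 18 * Fs ^ 5 + (16 : ℚ⟦X⟧) * (X:ℚ⟦X⟧) ^ 18 * Fs ^ 6 + (192 : ℚ⟦X⟧) * (X:ℚ⟦X⟧) ^ 19 + (-1152 : ℚ⟦X⟧) * (X:ℚ⟦X⟧) ^ 19 * Fs + (4320 : ℚ⟦X⟧) * (X:ℚ⟦X⟧) ^ 19 * Fs ^ 2 + (-5504 : ℚ⟦X⟧) * (X:ℚ⟦X⟧) ^ 19 * Fs ^ 3 + (1536 : ℚ⟦X⟧) * (X:ℚ⟦X⟧) ^ 19 * Fs ^ 4 + (1536 : ℚ⟦X⟧) * (X:ℚ⟦X⟧) ^ 19 * Fs ^ 5 + (32 : ℚ⟦X⟧) * (X:ℚ⟦X⟧) ^ 19 * Fs ^ 6 + (-192 : ℚ⟦X⟧) * (X:ℚ⟦X⟧) ^ 20 + (1920 : ℚ⟦X⟧) * (X:ℚ⟦X⟧) ^ 20 * Fs + (-384 : ℚ⟦X⟧) * (X:ℚ⟦X⟧) ^ 20 * Fs ^ 2 + (-7936 : ℚ⟦X⟧) * (X:ℚ⟦X⟧) ^ 20 * Fs ^ 3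 + (9792 : ℚ⟦X⟧) * (X:ℚ⟦X⟧) ^ 20 * Fs ^ 4 + (-1920 : ℚ⟦X⟧) * (X:ℚ⟦X⟧) ^ 20 * Fs ^ 5 + (-512 : ℚ⟦X⟧) * (X:ℚ⟦X⟧) ^ 20 * Fs ^ 6 + (-1024 : ℚ⟦X⟧) * (X:ℚ⟦X⟧) ^ 21 + (2560 : ℚ⟦X⟧) * (X:ℚ⟦X⟧) ^ 21 * Fs + (-10624 : ℚ⟦X⟧) * (X:ℚ⟦X⟧) ^ 21 * Fs ^ 2 + (8192 : ℚ⟦X⟧) * (X:ℚ⟦X⟧) ^ 21 * Fs ^ 3 + (6528 : ℚ⟦X⟧) * (X:ℚ⟦X⟧) ^ 21 * Fs ^ 4 + (-8448 : ℚ⟦X⟧) * (X:ℚ⟦X⟧) ^ 21 * Fs ^ 5 + (640 : ℚ⟦X⟧) * (X:ℚ⟦X⟧) ^ 21 * Fs ^ 6 + (256 : ℚ⟦X⟧) * (X:ℚ⟦X⟧) ^ 22 + (512 : ℚ⟦X⟧) * (X:ℚ⟦X⟧) ^ 22 * Fs + (-7680 : ℚ⟦X⟧) * (X:ℚ⟦X⟧)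 ^ 22 * Fs ^ 2 + (27648 : ℚ⟦X⟧) * (X:ℚ⟦X⟧) ^ 22 * Fs ^ 3 + (-16896 : ℚ⟦X⟧) * (X:ℚ⟦X⟧) ^ 22 * Fs ^ 4 + (-3072 : ℚ⟦X⟧) * (X:ℚ⟦X⟧) ^ 22 * Fs ^ 5 + (2816 : ℚ⟦X⟧) * (X:ℚ⟦X⟧) ^ 22 * Fs ^ 6 + (-2048 : ℚ⟦X⟧) * (X:ℚ⟦X⟧) ^ 23 + (4096 : ℚ⟦X⟧) * (X:ℚ⟦X⟧) ^ 23 * Fs + (1536 : ℚ⟦X⟧) * (X:ℚ⟦X⟧) ^ 23 * Fs ^ 2 + (6144 : ℚ⟦X⟧) * (X:ℚ⟦X⟧) ^ 23 * Fs ^ 3 + (-39424 : ℚ⟦X⟧) * (X:ℚ⟦X⟧) ^ 23 * Fs ^ 4 + (15360 : ℚ⟦X⟧) * (X:ℚ⟦X⟧) ^ 23 * Fs ^ 5 + (1024 : ℚ⟦X⟧) * (X:ℚ⟦X⟧) ^ 23 * Fs ^ 6 + (1024 : ℚ⟦X⟧) * (X:ℚ⟦X⟧) ^ 24 + (6144 :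 ℚ⟦X⟧) * (X:ℚ⟦X⟧) ^ 24 * Fs + (-4096 : ℚ⟦X⟧) * (X:ℚ⟦X⟧) ^ 24 * Fs ^ 2 + (-4096 : ℚ⟦X⟧) * (X:ℚ⟦X⟧) ^ 24 * Fs ^ 3 + (7168 : ℚ⟦X⟧) * (X:ℚ⟦X⟧) ^ 24 * Fs ^ 4 + (30720 : ℚ⟦X⟧) * (X:ℚ⟦X⟧) ^ 24 * Fs ^ 5 + (-5120 : ℚ⟦X⟧) * (X:ℚ⟦X⟧) ^ 24 * Fs ^ 6 + (2048 : ℚ⟦X⟧) * (X:ℚ⟦X⟧) ^ 25 + (-12288 : ℚ⟦X⟧) * (X:ℚ⟦X⟧) ^ 25 * Fs + (-6144 : ℚ⟦X⟧) * (X:ℚ⟦X⟧) ^ 25 * Fs ^ 2 + (2048 : ℚ⟦X⟧) * (X:ℚ⟦X⟧) ^ 25 * Fs ^ 4 + (-12288 : ℚ⟦X⟧) * (X:ℚ⟦X⟧) ^ 25 * Fs ^ 5 + (-10240 : ℚ⟦X⟧) * (X:ℚ⟦X⟧) ^ 25 * Fs ^ 6 + (12288 : ℚ⟦X⟧) * (X:ℚ⟦X⟧)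 ^ 26 * Fs ^ 2 + (4096 : ℚ⟦X⟧) * (X:ℚ⟦X⟧) ^ 26 * Fs ^ 6) * hP

lemma hPy_ne : ((1 : ℚ⟦X⟧) + (-2 : ℚ⟦X⟧) * Fs + (-2 : ℚ⟦X⟧) * (X:ℚ⟦X⟧) * Fs + (6 : ℚ⟦X⟧) * (X:ℚ⟦X⟧) * Fs ^ 2 + (-4 : ℚ⟦X⟧) * (X:ℚ⟦X⟧) ^ 2 * Fs ^ 3) ≠ 0 := by
  intro h
  have h0 := congrArg (constantCoeff) h
  simp [Fs, PowerSeries.constantCoeff_mk, laL0] at h0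

lemma hT : ((2 : ℚ⟦X⟧) * (X:ℚ⟦X⟧) * (d⁄dX ℚ Fs) + (-2 : ℚ⟦X⟧) * (X:ℚ⟦X⟧) * Fs + (X:ℚ⟦X⟧) ^ 2 * (d⁄dX ℚ (d⁄dX ℚ Fs)) + (-6 : ℚ⟦X⟧) * (X:ℚ⟦X⟧) ^ 2 * (d⁄dX ℚ Fs) + (8 : ℚ⟦X⟧) * (X:ℚ⟦X⟧) ^ 2 * Fs + (-2 : ℚ⟦X⟧) * (X:ℚ⟦X⟧) ^ 3 * (d⁄dX ℚ (d⁄dX ℚ Fs)) + (-24 : ℚ⟦X⟧) * (X:ℚ⟦X⟧) ^ 3 * (d⁄dX ℚ Fs) + (-20 : ℚ⟦X⟧) * (X:ℚ⟦X⟧) ^ 3 * Fs + (-16 : ℚ⟦X⟧) * (X:ℚ⟦X⟧) ^ 4 * (d⁄dX ℚ (d⁄dX ℚ Fs)) + (16 : ℚ⟦X⟧) * (X:ℚ⟦X⟧) ^ 4 * (d⁄dX ℚ Fs) + (-20 : ℚ⟦X⟧) * (X:ℚ⟦X⟧) ^ 4 * Fs + (24 : ℚ⟦X⟧) * (X:ℚ⟦X⟧)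 ^ 5 * (d⁄dX ℚ (d⁄dX ℚ Fs)) + (144 : ℚ⟦X⟧) * (X:ℚ⟦X⟧) ^ 5 * (d⁄dX ℚ Fs) + (56 : ℚ⟦X⟧) * (X:ℚ⟦X⟧) ^ 5 * Fs + (64 : ℚ⟦X⟧) * (X:ℚ⟦X⟧) ^ 6 * (d⁄dX ℚ (d⁄dX ℚ Fs)) + (96 : ℚ⟦X⟧) * (X:ℚ⟦X⟧) ^ 6 * (d⁄dX ℚ Fs) + (16 : ℚ⟦X⟧) * (X:ℚ⟦X⟧) ^ 6 * Fs + (-32 : ℚ⟦X⟧) * (X:ℚ⟦X⟧) ^ 7 * (d⁄dX ℚ (d⁄dX ℚ Fs)) + (-320 : ℚ⟦X⟧) * (X:ℚ⟦X⟧) ^ 7 * (d⁄dX ℚ Fs) + (-128 : ℚ⟦X⟧) * (X:ℚ⟦X⟧) ^ 8 * (d⁄dX ℚ (d⁄dX ℚ Fs)) + (-512 : ℚ⟦X⟧) * (X:ℚ⟦X⟧) ^ 8 * (d⁄dX ℚ Fs) + (-128 : ℚ⟦X⟧) * (X:ℚ⟦X⟧) ^ 9 * (d⁄dX ℚ (d⁄dX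 ℚ Fs)) + (512 : ℚ⟦X⟧) * (X:ℚ⟦X⟧) ^ 9 * (d⁄dX ℚ Fs) + (256 : ℚ⟦X⟧) * (X:ℚ⟦X⟧) ^ 10 * (d⁄dX ℚ (d⁄dX ℚ Fs))) = ((6 : ℚ⟦X⟧) * (X:ℚ⟦X⟧) ^ 2 + (-18 : ℚ⟦X⟧) * (X:ℚ⟦X⟧) ^ 3 + (-52 : ℚ⟦X⟧) * (X:ℚ⟦X⟧) ^ 4 + (40 : ℚ⟦X⟧) * (X:ℚ⟦X⟧) ^ 5 + (128 : ℚ⟦X⟧) * (X:ℚ⟦X⟧) ^ 6) := by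
  have h := hKey
  rw [mul_eq_zero, mul_eq_zero] at h
  rcases h with (h | h) | h
  · exact absurd h (pow_ne_zero _ PowerSeries.X_ne_zero)
  · exact absurd h (pow_ne_zero _ hPy_ne)
  · linear_combination h

lemma hTC : PowerSeries.C (2) * ((X:ℚ⟦X⟧) ^ 1 * (d⁄dX ℚ Fs)) + PowerSeries.C (-2) * ((X:ℚ⟦X⟧) ^ 1 * Fs) + PowerSeries.C (1) * ((X:ℚ⟦X⟧) ^ 2 * (d⁄dX ℚ (d⁄dX ℚ Fs))) + PowerSeries.C (-6) * ((X:ℚ⟦X⟧) ^ 2 * (d⁄dX ℚ Fs)) + PowerSeries.C (8) * ((X:ℚ⟦X⟧) ^ 2 * Fs) + PowerSeries.C (-2) * ((X:ℚ⟦X⟧) ^ 3 * (d⁄dX ℚ (d⁄dX ℚ Fs))) + PowerSeries.C (-24) * ((X:ℚ⟦X⟧) ^ 3 * (d⁄dX ℚ Fs)) + PowerSeries.C (-20) * ((X:ℚ⟦X⟧) ^ 3 * Fs) + PowerSeries.C (-16) * ((X:ℚ⟦X⟧) ^ 4 * (d⁄dX ℚ (d⁄dX ℚ Fs))) + PowerSeries.C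 (16) * ((X:ℚ⟦X⟧) ^ 4 * (d⁄dX ℚ Fs)) + PowerSeries.C (-20) * ((X:ℚ⟦X⟧) ^ 4 * Fs) + PowerSeries.C (24) * ((X:ℚ⟦X⟧) ^ 5 * (d⁄dX ℚ (d⁄dX ℚ Fs))) + PowerSeries.C (144) * ((X:ℚ⟦X⟧) ^ 5 * (d⁄dX ℚ Fs)) + PowerSeries.C (56) * ((X:ℚ⟦X⟧) ^ 5 * Fs) + PowerSeries.C (64) * ((X:ℚ⟦X⟧) ^ 6 * (d⁄dX ℚ (d⁄dX ℚ Fs))) + PowerSeries.C (96) * ((X:ℚ⟦X⟧) ^ 6 * (d⁄dX ℚ Fs)) + PowerSeries.C (16) * ((X:ℚ⟦X⟧) ^ 6 * Fs) + PowerSeries.C (-32) * ((X:ℚ⟦X⟧) ^ 7 * (d⁄dX ℚ (d⁄dX ℚ Fs))) + PowerSeries.C (-320) * ((X:ℚ⟦X⟧) ^ 7 * (d⁄dX ℚ Fs)) + PowerSeries.C (-128) * ((X:ℚ⟦X⟧) ^ 8 * (d⁄dX ℚ (d⁄dX ℚ Fs))) + PowerSeries.C (-512) * ((X:ℚ⟦X⟧)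 ^ 8 * (d⁄dX ℚ Fs)) + PowerSeries.C (-128) * ((X:ℚ⟦X⟧) ^ 9 * (d⁄dX ℚ (d⁄dX ℚ Fs))) + PowerSeries.C (512) * ((X:ℚ⟦X⟧) ^ 9 * (d⁄dX ℚ Fs)) + PowerSeries.C (256) * ((X:ℚ⟦X⟧) ^ 10 * (d⁄dX ℚ (d⁄dX ℚ Fs))) = PowerSeries.C (6) * ((X:ℚ⟦X⟧) ^ 2) + PowerSeries.C (-18) * ((X:ℚ⟦X⟧) ^ 3) + PowerSeries.C (-52) * ((X:ℚ⟦X⟧) ^ 4) + PowerSeries.C (40) * ((X:ℚ⟦X⟧) ^ 5) + PowerSeries.C (128) * ((X:ℚ⟦X⟧) ^ 6) := by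
  simp only [map_neg, map_ofNat, map_one]
  linear_combination hT

set_option maxHeartbeats 2000000 in
lemma keyQ (n : ℕ) :
    ((256:ℚ) * (n:ℚ) ^ 2 + (1280:ℚ) * (n:ℚ) + (1536:ℚ)) * ((la (n + 2)).length : ℚ) +
      ((-128:ℚ) * (n:ℚ) ^ 2 + (-1152:ℚ) * (n:ℚ) + (-2304:ℚ)) * ((la (n + 3)).length : ℚ) +
      ((-128:ℚ) * (n:ℚ) ^ 2 + (-1216:ℚ) * (n:ℚ) + (-2800:ℚ)) * ((la (n + 4)).length : ℚ) +
      ((-32:ℚ) * (n:ℚ) ^ 2 + (-192:ℚ) * (n:ℚ) + (-104:ℚ)) * ((la (n + 5)).length : ℚ) +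
      ((64:ℚ) * (n:ℚ) ^ 2 + (848:ℚ) * (n:ℚ) + (2764:ℚ)) * ((la (n + 6)).length : ℚ) +
      ((24:ℚ) * (n:ℚ) ^ 2 + (328:ℚ) * (n:ℚ) + (1100:ℚ)) * ((la (n + 7)).length : ℚ) +
      ((-16:ℚ) * (n:ℚ) ^ 2 + (-264:ℚ) * (n:ℚ) + (-1080:ℚ)) * ((la (n + 8)).length : ℚ) +
      ((-2:ℚ) * (n:ℚ) ^ 2 + (-40:ℚ) * (n:ℚ) + (-200:ℚ)) * ((la (n + 9)).length : ℚ) +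
      ((1:ℚ) * (n:ℚ) ^ 2 + (21:ℚ) * (n:ℚ) + (110:ℚ)) * ((la (n + 10)).length : ℚ) = 0 := by
  have h := congrArg (coeff (n+10)) hTC
  simp only [map_add, coeff_C_mul, coeff_X_pow_mul', coeff_derivative, coeff_Fs,
    coeff_X_pow, (show ((1:ℕ) ≤ n+10) by omega), (show ((2:ℕ) ≤ n+10) by omega), (show ((3:ℕ) ≤ n+10) by omega), (show ((4:ℕ) ≤ n+10) by omega), (show ((5:ℕ) ≤ n+10) by omega), (show ((6:ℕ) ≤ n+10) by omega), (show ((7:ℕ) ≤ n+10) by omega), (show ((8:ℕ) ≤ n+10) by omega), (show ((9:ℕ) ≤ n+10) by omega), (show ((10:ℕ) ≤ n+10) by omega),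
    (show ¬((n+10 : ℕ) = 2) by omega), (show ¬((n+10 : ℕ) = 3) by omega), (show ¬((n+10 : ℕ) = 4) by omega), (show ¬((n+10 : ℕ) = 5) by omega), (show ¬((n+10 : ℕ) = 6) by omega),
    ite_true, ite_false, if_true, if_false, mul_zero, mul_one, zero_add, add_zero] at h
  push_cast at h
  ring_nf at h ⊢
  linear_combination h

theorem stmt15 :
    u 0 = 0 ∧ u 1 = 0 ∧ u 2 = 1 ∧ u 3 = 0 ∧ u 4 = 1 ∧ u 5 = 1 ∧ u 6 = 2 ∧ u 7 = 2 ∧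
    ∀ n : ℕ,
      (256 * (n : ℤ) ^ 2 + 256 * (n : ℤ)) * (u n : ℤ) +
      (-128 * (n : ℤ) ^ 2 - 640 * (n : ℤ) - 512) * (u (n + 1) : ℤ) +
      (-128 * (n : ℤ) ^ 2 - 704 * (n : ℤ) - 880) * (u (n + 2) : ℤ) +
      (-32 * (n : ℤ) ^ 2 - 64 * (n : ℤ) + 152) * (u (n + 3) : ℤ) +
      (64 * (n : ℤ) ^ 2 + 592 * (n : ℤ) + 1324) * (u (n + 4) : ℤ) +
      (24 * (n : ℤ) ^ 2 + 232 * (n : ℤ) + 540) * (u (n + 5) : ℤ) +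
      (-16 * (n : ℤ) ^ 2 - 200 * (n : ℤ) - 616) * (u (n + 6) : ℤ) +
      (-2 * (n : ℤ) ^ 2 - 32 * (n : ℤ) - 128) * (u (n + 7) : ℤ) +
      ((n : ℤ) ^ 2 + 17 * (n : ℤ) + 72) * (u (n + 8) : ℤ) = 0 := by
  refine ⟨?_, ?_, ?_, ?_, ?_, ?_, ?_, ?_, ?_⟩
  · rw [u_eq_length, laL0]
  · rw [u_eq_length, laL1]
  · rw [u_eq_length, laL2]
  · rw [u_eq_length, laL3]
  · rw [u_eq_length, laL4]
  · rw [u_eq_length, laL5]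
  · rw [u_eq_length, laL6]
  · rw [u_eq_length, laL7]
  · intro n
    rcases n with _ | n
    · simp only [u_eq_length, Nat.zero_add, zero_add]
      norm_num [laL0, laL1, laL2, laL3, laL4, laL5, laL6, laL7, laL8]
    rcases n with _ | m
    · simp only [u_eq_length]
      norm_num [laL1, laL2, laL3, laL4, laL5, laL6, laL7, laL8, laL9]
    · have h := keyQ m
      apply Int.cast_injective (α := ℚ)
      simp only [show m+1+1 = m+2 from rfl, show m+2+1 = m+3 from rfl, show m+3+1 = m+4 from rfl, show m+4+1 = m+5 from rfl, show m+5+1 = m+6 from rfl, show m+6+1 = m+7 from rfl, show m+7+1 = m+8 from rfl, show m+8+1 = m+9 from rfl, show m+9+1 = m+10 from rfl]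
      push_cast [u_eq_length]
      linear_combination h
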